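/- arXiv:1911.02920 — 6 statements merged into one kernel-verified Lean document; each statement's English description precedes it below -/
import Mathlib

section
/- For all pairs X, Y of imaginary-quaternion pairs, G(X, JY) + J(G(X, Y)) = 0. -/
set_option maxHeartbeats 2000000


open Quaternion

noncomputable section

/-- The almost complex structure `J(α,β) = (1/√3)(2β−α, −2α+β)` on tangent pairs. -/
def Jmap (Z : ℍ[ℝ] × ℍ[ℝ]) : ℍ[ℝ] × ℍ[ℝ] :=
  ((Real.sqrt 3)⁻¹ • ((2 : ℝ) • Z.2 - Z.1), (Real.sqrt 3)⁻¹ • ((-2 : ℝ) • Z.1 + Z.2))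

/-- The almost product structure `P(α,β) = (β,α)`. -/
def Pmap (Z : ℍ[ℝ] × ℍ[ℝ]) : ℍ[ℝ] × ℍ[ℝ] := (Z.2, Z.1)

/-- The usual product structure `Q(α,β) = (−α,β)`. -/
def Qmap (Z : ℍ[ℝ] × ℍ[ℝ]) : ℍ[ℝ] × ℍ[ℝ] := (-Z.1, Z.2)

/-- The Euclidean inner product `⟨(α,β),(α',β')⟩ = ⟨α,α'⟩ + ⟨β,β'⟩`. -/
def eprod (Z Z' : ℍ[ℝ] × ℍ[ℝ]) : ℝ := (inner ℝ Z.1 Z'.1 : ℝ) + (inner ℝ Z.2 Z'.2 : ℝ)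

/-- The nearly Kähler metric `g(Z,Z') = (1/2)(⟨Z,Z'⟩ + ⟨JZ,JZ'⟩)`. -/
def gNK (Z Z' : ℍ[ℝ] × ℍ[ℝ]) : ℝ := (1 / 2) * (eprod Z Z' + eprod (Jmap Z) (Jmap Z'))

/-- The cross product of imaginary quaternions `α×β = (1/2)(αβ − βα)`. -/
def qcross (a b : ℍ[ℝ]) : ℍ[ℝ] := (1 / 2 : ℝ) • (a * b - b * a)

/-- The tensor `G((α,β),(γ,δ)) = (2/(3√3))(β×γ+α×δ+α×γ−2β×δ, −α×δ−β×γ+2α×γ−β×δ)`. -/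
def Gmap (X Y : ℍ[ℝ] × ℍ[ℝ]) : ℍ[ℝ] × ℍ[ℝ] :=
  (2 / (3 * Real.sqrt 3) : ℝ) •
    (qcross X.2 Y.1 + qcross X.1 Y.2 + qcross X.1 Y.1 - (2 : ℝ) • qcross X.2 Y.2,
     -qcross X.1 Y.2 - qcross X.2 Y.1 + (2 : ℝ) • qcross X.1 Y.1 - qcross X.2 Y.2)

theorem G_anticommutes_J (X Y : ℍ[ℝ] × ℍ[ℝ])
    (hX1 : X.1.re = 0) (hX2 : X.2.re = 0) (hY1 : Y.1.re = 0) (hY2 : Y.2.re = 0) :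
    Gmap X (Jmap Y) + Jmap (Gmap X Y) = 0 := by
  have h3 : Real.sqrt 3 ≠ 0 := by positivity
  obtain ⟨a, b⟩ := X
  obtain ⟨c, d⟩ := Y
  simp only [Gmap, Jmap, qcross, Prod.mk_add_mk, Prod.smul_mk, Prod.mk_eq_zero, Prod.fst, Prod.snd]
  constructor <;>
  · simp only [mul_add, add_mul, mul_sub, sub_mul, mul_smul_comm, smul_mul_assoc, smul_sub,
      smul_add, smul_smul, neg_smul, smul_neg, neg_mul, mul_neg, neg_neg, neg_add, neg_sub]
    match_scalars <;> (field_simp; ring)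
end
end

section
/- For all pairs X, Y of imaginary-quaternion pairs, P(G(X,Y)) + G(PX, PY) = 0. -/
open Quaternion

noncomputable section

theorem P_G_relation (X Y : ℍ[ℝ] × ℍ[ℝ])
    (hX1 : X.1.re = 0) (hX2 : X.2.re = 0) (hY1 : Y.1.re = 0) (hY2 : Y.2.re = 0) :
    Pmap (Gmap X Y) + Gmap (Pmap X) (Pmap Y) = 0 := by
  simp only [Pmap, Gmap, qcross, Prod.smul_mk, Prod.mk_add_mk, Prod.mk_eq_zero]
  constructor <;> module
end
end

section
/- Let c be a unit quaternion and define φ_c(α,β) = (cα c̄, cβ c̄) on pairs of imaginary quaternions (this is the tangent representation of the isometry F_{abc}(p,q)=(ap c̄, bq c̄) of S³×S³). Then cα c̄ is again imaginary for imaginary α, and φ_c satisfies: g(φ_c Z, φ_c Z') = g(Z, Z'), φ_c ∘ J = J ∘ φ_c, φ_c ∘ P = P ∘ φ_c, and φ_c(G(Z, W)) = G(φ_c Z, φ_c W) for all pairs Z, Z', W of imaginary quaternions; hence F_{abc} preserves the metric g, the almost complex structure J and the almost product structure P. -/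
open Quaternion

noncomputable section

/-- The tangent representation of the isometry `F_{abc}(p,q) = (a p c̄, b q c̄)`. -/
def phiMap (c : ℍ[ℝ]) (Z : ℍ[ℝ] × ℍ[ℝ]) : ℍ[ℝ] × ℍ[ℝ] :=
  (c * Z.1 * star c, c * Z.2 * star c)

-- helpers
lemma unit_star_mul (c : ℍ[ℝ]) (hc : ‖c‖ = 1) : star c * c = 1 := by
  rw [Quaternion.star_mul_self]
  have : normSq c = 1 := by
    have := Quaternion.normSq_eq_norm_mul_self (a := c)
    rw [hc] at this; simpa using this
  rw [this]; simp

lemma unit_mul_star (c : ℍ[ℝ]) (hc : ‖c‖ = 1) : c * star c = 1 := by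
  rw [Quaternion.self_mul_star]
  have : normSq c = 1 := by
    have := Quaternion.normSq_eq_norm_mul_self (a := c)
    rw [hc] at this; simpa using this
  rw [this]; simp

lemma re_mul_comm (a b : ℍ[ℝ]) : (a * b).re = (b * a).re := by
  simp [Quaternion.re_mul]; ring

lemma conj_re (c : ℍ[ℝ]) (hc : ‖c‖ = 1) (a : ℍ[ℝ]) : (c * a * star c).re = a.re := by
  rw [re_mul_comm, ← mul_assoc, unit_star_mul c hc, one_mul]

lemma conjq_mul (c : ℍ[ℝ]) (hc : ‖c‖ = 1) (a b : ℍ[ℝ]) :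
    (c * a * star c) * (c * b * star c) = c * (a * b) * star c := by
  simp only [mul_assoc]
  rw [← mul_assoc (star c) c, unit_star_mul c hc, one_mul]

lemma conj_add (c a b : ℍ[ℝ]) :
    c * (a + b) * star c = c * a * star c + c * b * star c := by
  rw [mul_add, add_mul]

lemma conj_sub (c a b : ℍ[ℝ]) :
    c * (a - b) * star c = c * a * star c - c * b * star c := by
  rw [mul_sub, sub_mul]

lemma conj_neg (c a : ℍ[ℝ]) : c * (-a) * star c = -(c * a * star c) := by
  rw [mul_neg, neg_mul]

lemma conj_smul (c : ℍ[ℝ]) (r : ℝ) (a : ℍ[ℝ]) :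
    c * (r • a) * star c = r • (c * a * star c) := by
  rw [mul_smul_comm, smul_mul_assoc]

lemma conj_inner (c : ℍ[ℝ]) (hc : ‖c‖ = 1) (a b : ℍ[ℝ]) :
    (inner ℝ (c * a * star c) (c * b * star c) : ℝ) = inner ℝ a b := by
  rw [Quaternion.inner_def, Quaternion.inner_def]
  have : (c * a * star c) * star (c * b * star c) = c * (a * star b) * star c := by
    simp only [star_mul, star_star, mul_assoc]
    rw [← mul_assoc (star c) c, unit_star_mul c hc, one_mul]
  rw [this, conj_re c hc]

lemma conj_qcross (c : ℍ[ℝ]) (hc : ‖c‖ = 1) (a b : ℍ[ℝ]) :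
    c * qcross a b * star c = qcross (c * a * star c) (c * b * star c) := by
  rw [qcross, qcross, conj_smul, conj_sub, conjq_mul c hc, conjq_mul c hc]

theorem Fabc_preserves_g_J_P_G (c : ℍ[ℝ]) (hc : ‖c‖ = 1) :
    (∀ α : ℍ[ℝ], α.re = 0 → (c * α * star c).re = 0) ∧
    (∀ Z Z' W : ℍ[ℝ] × ℍ[ℝ],
      Z.1.re = 0 → Z.2.re = 0 → Z'.1.re = 0 → Z'.2.re = 0 → W.1.re = 0 → W.2.re = 0 →
      gNK (phiMap c Z) (phiMap c Z') = gNK Z Z' ∧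
      phiMap c (Jmap Z) = Jmap (phiMap c Z) ∧
      phiMap c (Pmap Z) = Pmap (phiMap c Z) ∧
      phiMap c (Gmap Z W) = Gmap (phiMap c Z) (phiMap c W)) := by
  refine ⟨fun α hα => by rw [conj_re c hc, hα], fun Z Z' W _ _ _ _ _ _ => ?_⟩
  have hJ : ∀ Y : ℍ[ℝ] × ℍ[ℝ], phiMap c (Jmap Y) = Jmap (phiMap c Y) := by
    intro Y
    simp only [phiMap, Jmap, conj_smul, conj_sub, conj_add]
  refine ⟨?_, hJ Z, ?_, ?_⟩
  · simp only [gNK, eprod, ← hJ]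
    simp only [phiMap, conj_inner c hc]
  · rfl
  · simp only [phiMap, Gmap, Prod.smul_fst, Prod.smul_snd, conj_smul, conj_sub, conj_add,
      conj_neg, conj_qcross c hc]
    constructor <;> rfl
end
end

section
/- Let p be a unit quaternion and define T_p(α,β) = (−pα p̄, p(β−α)p̄) on pairs of imaginary quaternions (this is the tangent representation of the map F₂(p,q)=(p̄, q p̄) of S³×S³). Then T_p ∘ J = −J ∘ T_p; that is, F₂ preserves the almost complex structure J up to sign. -/
set_option maxHeartbeats 1000000

open Quaternion

noncomputable section

/-- The tangent representation of the map `F₂(p,q) = (p̄, q p̄)`. -/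
def Tmap (p : ℍ[ℝ]) (Z : ℍ[ℝ] × ℍ[ℝ]) : ℍ[ℝ] × ℍ[ℝ] :=
  (-(p * Z.1 * star p), p * (Z.2 - Z.1) * star p)

theorem F2_anticommutes_J (p : ℍ[ℝ]) (hp : ‖p‖ = 1)
    (α β : ℍ[ℝ]) (hα : α.re = 0) (hβ : β.re = 0) :
    Tmap p (Jmap (α, β)) = -Jmap (Tmap p (α, β)) := by
  simp only [Tmap, Jmap, Prod.mk.injEq, Prod.neg_mk, Prod.fst, Prod.snd]
  constructor <;>
  · simp only [smul_sub, smul_add, smul_smul, mul_smul_comm, smul_mul_assoc, smul_neg, neg_smul,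
      neg_neg, mul_sub, sub_mul, mul_add, add_mul, mul_neg, neg_mul]
    module
end
end

section
/- Let p be a unit quaternion and define T_p(α,β) = (−pα p̄, p(β−α)p̄) on pairs of imaginary quaternions (this is the tangent representation of the map F₂(p,q)=(p̄, q p̄) of S³×S³). Then for every pair Z of imaginary quaternions, P(T_p(Z)) = T_p((−(1/2)P + (√3/2)JP)(Z)); that is, F₂ intertwines P with the almost product structure −(1/2)P + (√3/2)JP. -/
open Quaternion

noncomputable section

theorem F2_intertwines_P (p : ℍ[ℝ]) (hp : ‖p‖ = 1)
    (Z : ℍ[ℝ] × ℍ[ℝ]) (hZ1 : Z.1.re = 0) (hZ2 : Z.2.re = 0) :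
    Pmap (Tmap p Z) =
      Tmap p ((-(1 / 2) : ℝ) • Pmap Z + (Real.sqrt 3 / 2 : ℝ) • Jmap (Pmap Z)) := by
  have h3 : Real.sqrt 3 ≠ 0 := by positivity
  have key : ((-(1 / 2) : ℝ) • Pmap Z + (Real.sqrt 3 / 2 : ℝ) • Jmap (Pmap Z))
      = (Z.1 - Z.2, -Z.2) := by
    simp only [Pmap, Jmap, Prod.ext_iff, Prod.smul_fst, Prod.smul_snd, Prod.fst_add,
      Prod.snd_add]
    have e : Real.sqrt 3 / 2 * (Real.sqrt 3)⁻¹ = 1 / 2 := by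
      rw [div_mul_eq_mul_div, mul_comm, inv_mul_cancel₀ h3]
    constructor <;> (rw [smul_smul, e]; module)
  rw [key]
  simp only [Pmap, Tmap, Prod.ext_iff]
  constructor <;> noncomm_ring
end
end

section
/- Let p be a unit quaternion and define T_p(α,β) = (−pα p̄, p(β−α)p̄) on pairs of imaginary quaternions (this is the tangent representation of the map F₂(p,q)=(p̄, q p̄) of S³×S³). Then g(T_p Z, T_p Z') = g(Z, Z') for all pairs Z, Z' of imaginary quaternions; that is, F₂ is an isometry of the nearly Kähler metric g. -/
open Quaternion

noncomputable section

lemma normSq_one (p : ℍ[ℝ]) (hp : ‖p‖ = 1) :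
    p.re ^ 2 + p.imI ^ 2 + p.imJ ^ 2 + p.imK ^ 2 = 1 := by
  have h := Quaternion.normSq_eq_norm_mul_self p
  rw [hp, mul_one] at h
  rw [Quaternion.normSq_def'] at h
  linarith [h]

lemma conj_inner_s15 (p : ℍ[ℝ]) (hp : ‖p‖ = 1) (x y : ℍ[ℝ]) :
    (inner ℝ (p * x * star p) (p * y * star p) : ℝ) = (inner ℝ x y : ℝ) := by
  have h1 : star p * p = 1 := by
    rw [Quaternion.star_mul_self, Quaternion.normSq_eq_norm_mul_self, hp]
    norm_num
  have key : (p * x * star p) * star (p * y * star p) = p * (x * star y) * star p := by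
    simp only [star_mul, star_star, mul_assoc]
    rw [← mul_assoc (star p) p, h1, one_mul]
  rw [Quaternion.inner_def, Quaternion.inner_def, key]
  have hn := normSq_one p hp
  have hw : ∀ w : ℍ[ℝ], (p * w * star p).re = w.re := by
    intro w
    simp only [Quaternion.re_mul, Quaternion.imI_mul, Quaternion.imJ_mul, Quaternion.imK_mul,
      Quaternion.re_star, Quaternion.imI_star, Quaternion.imJ_star, Quaternion.imK_star]
    linear_combination w.re * hn
  exact hw _

theorem F2_isometry (p : ℍ[ℝ]) (hp : ‖p‖ = 1)
    (Z Z' : ℍ[ℝ] × ℍ[ℝ]) (hZ1 : Z.1.re = 0) (hZ2 : Z.2.re = 0)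
    (hZ'1 : Z'.1.re = 0) (hZ'2 : Z'.2.re = 0) :
    gNK (Tmap p Z) (Tmap p Z') = gNK Z Z' := by
  have h3 : ((Real.sqrt 3)⁻¹ : ℝ) ^ 2 = 1 / 3 := by
    rw [sq, ← mul_inv, Real.mul_self_sqrt (by norm_num)]
    norm_num
  simp only [gNK, eprod, Jmap, Tmap]
  simp only [real_inner_smul_left, real_inner_smul_right, inner_sub_left, inner_sub_right,
    inner_add_left, inner_add_right, inner_neg_left, inner_neg_right, conj_inner_s15 p hp]
  ring_nf
  rw [h3]
  linarith
end
end
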